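/- For every integer n ≥ 5 and every hub seed ψ ∈ Hub_n, the first son β = son(ψ, 1) (the seed β with σ(ψ^(1)) = β̃) is also a hub seed, and height(β) = height(ψ). -/

import Mathlib

/-- `σ`: cyclic left shift by one position. -/
def sig (l : List ℕ) : List ℕ := l.rotate 1

/-- `τ`: transposition of the first two entries. -/
def tau : List ℕ → List ℕ
  | a :: b :: rest => b :: a :: rest
  | l => l

/-- Apply a word over the alphabet {σ,τ} (encoded: `false` = σ, `true` = τ)
letter by letter, from left to right. -/
def applyWord (w : List Bool) (l : List ℕ) : List ℕ :=
  w.foldl (fun p c => if c then tau p else sig p) l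

/-- `l` is an n-permutation: a sequence containing each of 1,…,n exactly once. -/
def IsPerm (n : ℕ) (l : List ℕ) : Prop := l.Perm (List.range' 1 n)

/-- The permutation (n, n−1, …, 1). -/
def descList (n : ℕ) : List ℕ := (List.range n).reverse.map (· + 1)

/-- Cyclic successor ⊕1 on {1,…,n−1}. -/
def osucc (n a : ℕ) : ℕ := if a = n - 1 then 1 else a + 1

/-- Cyclic predecessor ⊖1 on {1,…,n−1}. -/
def opred (n a : ℕ) : ℕ := if a = 1 then n - 1 else a - 1

/-- From a seed (a₁, a₂, …, a_{n−1}) form (a₁, a₂⊕1, a₂, …, a_{n−1}). -/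
def seedToPerm (n : ℕ) : List ℕ → List ℕ
  | a1 :: a2 :: rest => a1 :: osucc n a2 :: a2 :: rest
  | l => l

/-- ψ is a seed: an (n−1)-tuple of distinct elements of {1,…,n} with first entry n
such that (a₁, a₂⊕1, a₂, …, a_{n−1}) is an n-permutation. -/
def IsSeed (n : ℕ) (ψ : List ℕ) : Prop :=
  ψ.length = n - 1 ∧ ψ.head? = some n ∧ IsPerm n (seedToPerm n ψ)

/-- The missing element mis(ψ) = a₂⊕1. -/
def mis (n : ℕ) (ψ : List ℕ) : ℕ := osucc n (ψ.getD 1 0)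

/-- The package perms(ψ): all permutations obtained by inserting mis(ψ)
at any position of ψ and then taking any cyclic shift. -/
def perms (n : ℕ) (ψ : List ℕ) : Set (List ℕ) :=
  { π | ∃ i j, i ≤ ψ.length ∧ π = (ψ.insertIdx i (mis n ψ)).rotate j }

/-- cycle(π): the set of cyclic shifts of π. -/
def cycle (π : List ℕ) : Set (List ℕ) := { ρ | ∃ j, ρ = π.rotate j }

/-- ψ̃ = (a₁, mis(ψ), a₂, …, a_{n−1}). -/
def tildeSeed (n : ℕ) (ψ : List ℕ) : List ℕ :=
  match ψ with
  | a1 :: rest => a1 :: mis n ψ :: rest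
  | [] => []

/-- ψ^(i) (for 1 ≤ i ≤ n−1): the right cyclic shift of ψ by i−1 positions
with mis(ψ) prepended; for i = n−1 this is (x, a₂, …, a_{n−1}, a₁). -/
def seedShift (n : ℕ) (ψ : List ℕ) (i : ℕ) : List ℕ := mis n ψ :: ψ.rotate (n - i)

/-- Length of the maximal initial run a = b⊕1 in a list. -/
def decRun (n : ℕ) : List ℕ → ℕ
  | a :: b :: rest => if a = osucc n b then decRun n (b :: rest) + 1 else 1
  | [_] => 1
  | [] => 0

/-- height(ψ): the largest k with aᵢ = a_{i+1}⊕1 for all 2 ≤ i ≤ k. -/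
def height (n : ℕ) (ψ : List ℕ) : ℕ := decRun n ψ.tail

/-- The hub seed (n, b, b⊖1, …, b⊖(n−3)). -/
def hubSeed (n b : ℕ) : List ℕ := n :: (List.range (n - 2)).map (fun j => (opred n)^[j] b)

/-- Hubₙ: the set of hub seeds. -/
def Hub (n : ℕ) : Set (List ℕ) := { ψ | ∃ b, 1 ≤ b ∧ b ≤ n - 1 ∧ ψ = hubSeed n b }

/-- `IsParent n ψ β` means ψ = parent(β): ψ, β are neighboring distinct seeds,
height(ψ) > 1 and mis(ψ) = mis(β)⊕1. -/
def IsParent (n : ℕ) (par child : List ℕ) : Prop :=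
  IsSeed n par ∧ IsSeed n child ∧ par ≠ child ∧
  (perms n par ∩ perms n child).Nonempty ∧
  1 < height n par ∧ mis n par = osucc n (mis n child)

/-- `IsSon n β ψ i` means β = son(ψ, i), i.e. β is a seed with σ^i(ψ^(i)) = β̃. -/
def IsSon (n : ℕ) (child par : List ℕ) (i : ℕ) : Prop :=
  IsSeed n child ∧ sig^[i] (seedShift n par i) = tildeSeed n child

/-- γ_k = σ^k τ. -/
def gam (k : ℕ) : List Bool := List.replicate k false ++ [true]

/-- W_0 = σ and W_k = τ · ∏_{i=1}^{n−2} σ^i W_{Δ(k,i)} γ_{n−2−i},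
where Δ(k,i) = min(k−1, n−2−i). -/
def W (n : ℕ) : ℕ → List Bool
  | 0 => [false]
  | k + 1 => true :: ((List.range (n - 2)).map (fun j =>
      List.replicate (j + 1) false ++ W n (min k (n - 2 - (j + 1))) ++
        gam (n - 2 - (j + 1)))).flatten
  termination_by k => k
  decreasing_by omega

/-- V_n = γ_{n−3} · ∏_{i=2}^{n−3} σ^i W_{Δ(n−3,i)} γ_{n−2−i} · σ^{n−1}. -/
def V (n : ℕ) : List Bool :=
  gam (n - 3) ++
  ((List.range (n - 4)).map (fun j =>
    List.replicate (j + 2) false ++ W n (min (n - 4) (n - 2 - (j + 2))) ++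
      gam (n - 2 - (j + 2)))).flatten ++
  List.replicate (n - 1) false

/-- SEQ_n = γ₁^{n−2} σ² (V_n τ)^{n−2} V_n. -/
def SEQ (n : ℕ) : List Bool :=
  (List.replicate (n - 2) (gam 1)).flatten ++ List.replicate 2 false ++
  (List.replicate (n - 2) (V n ++ [true])).flatten ++ V n

/-- r: the first element after the value n in the left-to-right cyclic reading
of π with the entry p₂ skipped. -/
def rVal (n : ℕ) (π : List ℕ) : ℕ :=
  match π with
  | p1 :: _ :: rest =>
      let l := p1 :: rest
      l.getD ((l.idxOf n + 1) % l.length) 0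
  | _ => 0

/-- The Sawada–Williams successor function `next`. -/
def swNext (n : ℕ) (π : List ℕ) : List ℕ :=
  if π = descList n then sig π
  else if π.getD 1 0 ≠ n ∧ π.getD 1 0 = osucc n (rVal n π) then tau π else sig π

/-- GEN(π, α): all permutations visited (including π) when α is applied to π. -/
def GEN (α : List Bool) (π : List ℕ) : Set (List ℕ) :=
  { ρ | ∃ t, t ≤ α.length ∧ ρ = applyWord (α.take t) π }

/-- Tree(ψ): ψ together with all seeds from which ψ is reachable by parent links. -/
def SeedTree (n : ℕ) (ψ : List ℕ) : Set (List ℕ) :=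
  { β | Relation.ReflTransGen (fun x y => IsParent n y x) β ψ }

/-- bunch(ψ) = (⋃_{β ∈ Tree(ψ)} perms(β) ∖ cycle(ψ̃)) ∪ {ψ̃, ψ^(n−1)}. -/
def bunch (n : ℕ) (ψ : List ℕ) : Set (List ℕ) :=
  ((⋃ β ∈ SeedTree n ψ, perms n β) \ cycle (tildeSeed n ψ)) ∪
    {tildeSeed n ψ, seedShift n ψ (n - 1)}

/-- rank(π): the number of initial letters of SEQ_n needed to reach π from
π₀ = τ((n, n−1, …, 1)). -/
noncomputable def rank (n : ℕ) (π : List ℕ) : ℕ :=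
  sInf { t | applyWord ((SEQ n).take t) (tau (descList n)) = π }

/-- SUM(k,j) = |τ · ∏_{i=1}^{j−1} σ^i W_{Δ(k,i)} γ_{n−2−i}| + j. -/
def SUMw (n k j : ℕ) : ℕ :=
  (true :: ((List.range (j - 1)).map (fun m =>
    List.replicate (m + 1) false ++ W n (min (k - 1) (n - 2 - (m + 1))) ++
      gam (n - 2 - (m + 1)))).flatten).length + j

/-- ord(ψ): the position of the entry mis(ψ)⊕1 in ψ, counted from the right end. -/
def ord (n : ℕ) (ψ : List ℕ) : ℕ := ψ.length - ψ.idxOf (osucc n (mis n ψ))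

/-- Length of the continuation of the maximal decreasing subsequence starting
with current value `cur`. -/
def chainLen (n : ℕ) : List ℕ → ℕ → ℕ
  | [], _ => 0
  | b :: rest, cur => if cur = osucc n b then chainLen n rest b + 1 else chainLen n rest cur

/-- level(ψ) = n − m − 3, where m+1 is the length of dec_seq(ψ). -/
def level (n : ℕ) (ψ : List ℕ) : ℕ := n - chainLen n (ψ.drop 2) (ψ.getD 1 0) - 3



/- ### Auxiliary lemmas for `first_son_of_hub` -/

lemma opred_mem {n a : ℕ} (h1 : 1 ≤ a) (h2 : a ≤ n - 1) :
    1 ≤ opred n a ∧ opred n a ≤ n - 1 := by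
  unfold opred; split <;> omega

lemma osucc_opred {n a : ℕ} (h1 : 1 ≤ a) (h2 : a ≤ n - 1) :
    osucc n (opred n a) = a := by
  unfold osucc opred; split_ifs <;> omega

lemma iter_opred_formula {n : ℕ} (hn : 3 ≤ n) (j : ℕ) {b : ℕ} (h1 : 1 ≤ b) (h2 : b ≤ n - 1) :
    (opred n)^[j] b = (b - 1 + j * (n - 2)) % (n - 1) + 1 := by
  induction j with
  | zero =>
      simp [Nat.mod_eq_of_lt (show b - 1 < n - 1 by omega)]
      omega
  | succ j ih =>
      rw [Function.iterate_succ_apply', ih]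
      have key : (b - 1 + (j + 1) * (n - 2)) % (n - 1)
          = ((b - 1 + j * (n - 2)) % (n - 1) + (n - 2)) % (n - 1) := by
        rw [Nat.succ_mul, ← Nat.add_assoc, Nat.add_mod, Nat.mod_eq_of_lt (show n-2 < n-1 by omega)]
      set r := (b - 1 + j * (n - 2)) % (n - 1) with hr
      have hrlt : r < n - 1 := Nat.mod_lt _ (by omega)
      unfold opred
      split_ifs with h
      · have h0 : r = 0 := by omega
        rw [key, h0, Nat.zero_add, Nat.mod_eq_of_lt (show n-2 < n-1 by omega)]
        omega
      · have h1' : 1 ≤ r := by omega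
        have : (r + (n - 2)) % (n - 1) = r - 1 := by
          have : r + (n - 2) = (r - 1) + (n - 1) := by omega
          rw [this, Nat.add_mod_right, Nat.mod_eq_of_lt (by omega)]
        rw [key, this]
        omega

lemma iter_opred_cycle {n b : ℕ} (hn : 3 ≤ n) (h1 : 1 ≤ b) (h2 : b ≤ n - 1) :
    (opred n)^[n - 2] b = osucc n b := by
  rw [iter_opred_formula hn _ h1 h2]
  obtain ⟨m, rfl⟩ : ∃ m, n = m + 3 := ⟨n - 3, by omega⟩
  have h3 : (m + 3) - 2 = m + 1 := by omega
  have h4 : (m + 3) - 1 = m + 2 := by omega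
  rw [h3, h4]
  have hsq : (m + 1) * (m + 1) = m * (m + 2) + 1 := by ring
  have : b - 1 + (m + 1) * (m + 1) = b + m * (m + 2) := by
    rw [hsq]; omega
  rw [this, Nat.add_mul_mod_self_right]
  unfold osucc
  rcases Nat.lt_or_ge b (m + 2) with h | h
  · rw [Nat.mod_eq_of_lt h]; split_ifs <;> omega
  · have : b = m + 2 := by omega
    subst this
    simp

lemma map_iter_expand (n c m : ℕ) :
    (List.range (m + 1)).map (fun j => (opred n)^[j] c)
      = c :: (List.range m).map (fun j => (opred n)^[j] (opred n c)) := by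
  rw [List.range_succ_eq_map, List.map_cons, List.map_map]
  simp [Function.comp_def, Function.iterate_succ_apply]

lemma decRun_hub {n : ℕ} (hn : 3 ≤ n) :
    ∀ (m : ℕ) {c : ℕ}, 1 ≤ c → c ≤ n - 1 →
      decRun n ((List.range (m + 1)).map (fun j => (opred n)^[j] c)) = m + 1 := by
  intro m
  induction m with
  | zero =>
      intro c h1 h2
      rw [map_iter_expand]
      simp [decRun]
  | succ m ih =>
      intro c h1 h2
      rw [map_iter_expand, map_iter_expand]
      simp only [decRun]
      rw [osucc_opred h1 h2, if_pos rfl, ← map_iter_expand]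
      rw [ih (opred_mem h1 h2).1 (opred_mem h1 h2).2]

lemma hub_key {n b : ℕ} (hn : 5 ≤ n) (h1 : 1 ≤ b) (h2 : b ≤ n - 1) :
    (List.range (n - 2)).map (fun j => (opred n)^[j] b) ++ [osucc n b]
      = b :: (List.range (n - 2)).map (fun j => (opred n)^[j] (opred n b)) := by
  rw [← map_iter_expand n b (n - 2), List.range_succ, List.map_append,
    List.map_singleton, iter_opred_cycle (by omega) h1 h2]

/-- the first son of a hub seed is a hub seed of the same height. -/
theorem first_son_of_hub (n : ℕ) (hn : 5 ≤ n) (ψ : List ℕ) (hψ : IsSeed n ψ)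
    (hhub : ψ ∈ Hub n) :
    ∃ β, IsSon n β ψ 1 ∧ β ∈ Hub n ∧ height n β = height n ψ := by
  obtain ⟨b, hb1, hb2, rfl⟩ := hhub
  have hn3 : 3 ≤ n := by omega
  have hb'1 : 1 ≤ opred n b := (opred_mem hb1 hb2).1
  have hb'2 : opred n b ≤ n - 1 := (opred_mem hb1 hb2).2
  have hexp : ∀ c : ℕ, hubSeed n c
      = n :: c :: (List.range (n - 3)).map (fun j => (opred n)^[j] (opred n c)) := by
    intro c
    rw [hubSeed, show n - 2 = (n - 3) + 1 by omega, map_iter_expand]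
  -- key list equality
  have hkey := hub_key hn hb1 hb2
  -- ψ and β expansions
  have hψ2 : hubSeed n b = n :: (List.range (n - 2)).map (fun j => (opred n)^[j] b) := rfl
  have hβ2 : hubSeed n (opred n b)
      = n :: (List.range (n - 2)).map (fun j => (opred n)^[j] (opred n b)) := rfl
  -- length of ψ
  have hlen : (hubSeed n b).length = n - 1 := by
    rw [hψ2]; simp; omega
  -- mis of ψ
  have hmisψ : mis n (hubSeed n b) = osucc n b := by
    rw [mis, hexp b]
    simp
  -- mis of β
  have hmisβ : mis n (hubSeed n (opred n b)) = b := by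
    rw [mis, hexp (opred n b)]
    simp [osucc_opred hb1 hb2]
  -- tildeSeed of β
  have htilde : tildeSeed n (hubSeed n (opred n b))
      = n :: b :: (List.range (n - 2)).map (fun j => (opred n)^[j] (opred n b)) := by
    conv_lhs => rw [hβ2]
    rw [tildeSeed]
    rw [← hβ2, hmisβ]
  -- IsSeed for β
  have hseedβ : IsSeed n (hubSeed n (opred n b)) := by
    refine ⟨?_, ?_, ?_⟩
    · rw [hβ2]; simp; omega
    · rw [hβ2]; rfl
    · -- IsPerm
      have hstp : seedToPerm n (hubSeed n (opred n b))
          = n :: b :: (List.range (n - 2)).map (fun j => (opred n)^[j] (opred n b)) := by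
        rw [hexp (opred n b), seedToPerm, osucc_opred hb1 hb2]
        conv_rhs => rw [show n - 2 = (n - 3) + 1 from by omega, map_iter_expand]
      have hstpψ : seedToPerm n (hubSeed n b)
          = n :: osucc n b :: b :: (List.range (n - 3)).map (fun j => (opred n)^[j] (opred n b)) := by
        rw [hexp b, seedToPerm]
      have hperm : (seedToPerm n (hubSeed n (opred n b))).Perm (seedToPerm n (hubSeed n b)) := by
        rw [hstp, hstpψ, ← hkey]
        refine List.Perm.cons n ?_
        have e2 : (osucc n b :: b :: (List.range (n - 3)).map (fun j => (opred n)^[j] (opred n b)))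
            = osucc n b :: (List.range (n - 2)).map (fun j => (opred n)^[j] b) := by
          rw [show n - 2 = (n - 3) + 1 by omega, map_iter_expand]
        rw [e2]
        exact List.perm_append_singleton _ _
      exact hperm.trans hψ.2.2
  refine ⟨hubSeed n (opred n b), ⟨hseedβ, ?_⟩, ⟨opred n b, hb'1, hb'2, rfl⟩, ?_⟩
  · -- σ(ψ^(1)) = β̃
    rw [Function.iterate_one, seedShift, hmisψ,
      show n - 1 = (hubSeed n b).length from hlen.symm, List.rotate_length]
    rw [sig, hψ2, List.rotate_cons_succ, List.rotate_zero, htilde]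
    rw [List.cons_append, hkey]
  · -- heights agree
    have h1 : height n (hubSeed n (opred n b)) = n - 2 := by
      rw [height, hβ2, List.tail_cons, show n - 2 = (n - 3) + 1 by omega,
        decRun_hub hn3 (n - 3) hb'1 hb'2]
    have h2 : height n (hubSeed n b) = n - 2 := by
      rw [height, hψ2, List.tail_cons, show n - 2 = (n - 3) + 1 by omega,
        decRun_hub hn3 (n - 3) hb1 hb2]
    rw [h1, h2]
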